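/- Let C* be a finite-dimensional graded complex over ℂ with differential d, non-degenerate graded bilinear form b, transpose differential dᵗ, and B := ddᵗ + dᵗd with ker B = 0. Let B^q denote the restriction of B to C^q. Then the torsion of the acyclic complex C* with respect to the equivalence class of graded bases determined by b satisfies τ(C*, b)² = ∏_q (det B^q)^{(−1)^{q+1} q}. -/

import Mathlib

open scoped BigOperators

lemma aux_det_prodMap {R M₁ M₂ : Type*} [CommRing R] [AddCommGroup M₁] [AddCommGroup M₂]
    [Module R M₁] [Module R M₂] [Module.Free R M₁] [Module.Free R M₂]
    [Module.Finite R M₁] [Module.Finite R M₂]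
    (f : M₁ →ₗ[R] M₁) (g : M₂ →ₗ[R] M₂) :
    LinearMap.det (f.prodMap g) = LinearMap.det f * LinearMap.det g := by
  classical
  let b₁ := Module.Free.chooseBasis R M₁
  let b₂ := Module.Free.chooseBasis R M₂
  rw [← LinearMap.det_toMatrix b₁ f, ← LinearMap.det_toMatrix b₂ g,
    ← LinearMap.det_toMatrix (b₁.prod b₂) (f.prodMap g),
    LinearMap.toMatrix_prodMap b₁ b₂ f g, Matrix.det_fromBlocks_zero₁₂]

lemma aux_det_isCompl {E : Type*} [AddCommGroup E] [Module ℂ E] [FiniteDimensional ℂ E]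
    {p q : Submodule ℂ E} (h : IsCompl p q) (f : E →ₗ[ℂ] E)
    (hp : ∀ x ∈ p, f x ∈ p) (hq : ∀ x ∈ q, f x ∈ q) :
    LinearMap.det f = LinearMap.det (f.restrict hp) * LinearMap.det (f.restrict hq) := by
  classical
  set e := Submodule.prodEquivOfIsCompl p q h with he_def
  have he : ∀ z : p × q, f (e z) = e (((f.restrict hp).prodMap (f.restrict hq)) z) := by
    rintro ⟨x, y⟩
    simp [he_def, Submodule.coe_prodEquivOfIsCompl', LinearMap.prodMap_apply, map_add,
      LinearMap.restrict_coe_apply]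
  have key : f = (e : p × q →ₗ[ℂ] E) ∘ₗ ((f.restrict hp).prodMap (f.restrict hq)) ∘ₗ
      (e.symm : E →ₗ[ℂ] p × q) := by
    ext z
    have h2 := he (e.symm z)
    rw [e.apply_symm_apply] at h2
    simpa using h2
  rw [congrArg LinearMap.det key, LinearMap.det_conj, aux_det_prodMap]

/-- Torsion of an acyclic finite dimensional graded complex with non-degenerate bilinear
form `b`: `τ(C*,b)² = ∏_q (det B^q)^{(-1)^{q+1} q}` where
`τ(C*,b)² = ∏_q (det (dᵗd|_{im dᵗ ∩ C^q}))^{(-1)^q}`. -/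
theorem stmt_5 (Cx : ℤ → Type) [∀ n, AddCommGroup (Cx n)] [∀ n, Module ℂ (Cx n)]
    [∀ n, FiniteDimensional ℂ (Cx n)]
    (hfin : {n : ℤ | ¬ Subsingleton (Cx n)}.Finite)
    (d : ∀ n, Cx n →ₗ[ℂ] Cx (n + 1)) (dt : ∀ n, Cx (n + 1) →ₗ[ℂ] Cx n)
    (b : ∀ n, Cx n →ₗ[ℂ] Cx n →ₗ[ℂ] ℂ)
    (hb : ∀ n, LinearMap.BilinForm.Nondegenerate (b n))
    (hdd : ∀ n, (d (n + 1)).comp (d n) = 0)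
    (htrans : ∀ n (v : Cx n) (w : Cx (n + 1)), b (n + 1) (d n v) w = b n v (dt n w))
    (B : ∀ n, Cx n →ₗ[ℂ] Cx n)
    (hB : ∀ n, B (n + 1) = (dt (n + 1)).comp (d (n + 1)) + (d n).comp (dt n))
    (hker : ∀ n, LinearMap.ker (B n) = ⊥) :
    (∏ᶠ n : ℤ, LinearMap.det
        (((dt n).comp (d n)).restrict
          (p := LinearMap.range (dt n)) (q := LinearMap.range (dt n))
          (fun x _ => LinearMap.mem_range_self (dt n) (d n x)))
        ^ ((((-1 : ℤˣ) ^ n : ℤˣ) : ℤ))) =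
      ∏ᶠ n : ℤ, LinearMap.det (B n) ^ (((((-1 : ℤˣ) ^ (n + 1) : ℤˣ) : ℤ)) * n) := by
  classical
  set a : ℤ → ℂ := fun n => LinearMap.det
      (((dt n).comp (d n)).restrict
        (p := LinearMap.range (dt n)) (q := LinearMap.range (dt n))
        (fun x _ => LinearMap.mem_range_self (dt n) (d n x))) with ha_def
  have Binj : ∀ n, Function.Injective (B n) := fun n => LinearMap.ker_eq_bot.mp (hker n)
  have Bsurj : ∀ n, Function.Surjective (B n) := fun n =>
    LinearMap.injective_iff_surjective.mp (Binj n)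
  have hdd' : ∀ n (x : Cx n), d (n + 1) (d n x) = 0 := by
    intro n x
    have := congrArg (fun f => f x) (hdd n)
    simpa using this
  have hdtdt : ∀ n (w : Cx (n + 1 + 1)), dt n (dt (n + 1) w) = 0 := by
    intro n w
    apply (hb n).flip.1
    intro x
    simp only [LinearMap.BilinForm.flip_apply]
    rw [← htrans n x (dt (n + 1) w), ← htrans (n + 1) (d n x) w,
      hdd' n x, map_zero, LinearMap.zero_apply]
  have hBapp : ∀ n (x : Cx (n + 1)),
      B (n + 1) x = dt (n + 1) (d (n + 1) x) + d n (dt n x) := by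
    intro n x
    rw [hB n]
    rfl
  -- ψ-injectivity: `dt n` is injective on the range of `d n`
  have injpsi : ∀ n (x : Cx (n + 1)), x ∈ LinearMap.range (d n) → dt n x = 0 → x = 0 := by
    rintro n x ⟨y, rfl⟩ h0
    apply Binj (n + 1)
    rw [map_zero, hBapp, hdd' n y, map_zero, zero_add, h0, map_zero]
  -- φ-surjectivity: every element of range (d n) has the form d n (dt n y)
  have surjphi : ∀ n (v : Cx (n + 1)), v ∈ LinearMap.range (d n) →
      ∃ y : Cx (n + 1), d n (dt n y) = v := by
    intro n v hv
    have hmap : ∀ x ∈ LinearMap.range (d n), B (n + 1) x ∈ LinearMap.range (d n) := by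
      rintro x ⟨y, rfl⟩
      rw [hBapp, hdd' n y, map_zero, zero_add]
      exact LinearMap.mem_range_self _ _
    set r := (B (n + 1)).restrict hmap with hr_def
    have hrinj : Function.Injective r := by
      intro z₁ z₂ h
      have := congrArg Subtype.val h
      simp only [hr_def, LinearMap.restrict_coe_apply] at this
      exact Subtype.ext (Binj (n + 1) this)
    have hrsurj : Function.Surjective r := LinearMap.injective_iff_surjective.mp hrinj
    obtain ⟨⟨w, hw⟩, hrw⟩ := hrsurj ⟨v, hv⟩
    have hBw : B (n + 1) w = v := by
      have := congrArg Subtype.val hrw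
      simpa [hr_def, LinearMap.restrict_coe_apply] using this
    obtain ⟨z, rfl⟩ := hw
    refine ⟨d n z, ?_⟩
    rw [← hBw, hBapp, hdd' n z, map_zero, zero_add]
  -- ψ-surjectivity at shifted index
  have surpsi : ∀ n : ℤ, ∀ v ∈ LinearMap.range (dt (n + 1)),
      ∃ y : Cx (n + 1), dt (n + 1) (d (n + 1) y) = v := by
    intro n v hv
    have hmap : ∀ x ∈ LinearMap.range (dt (n + 1)),
        B (n + 1) x ∈ LinearMap.range (dt (n + 1)) := by
      rintro x ⟨y, rfl⟩
      rw [hBapp, hdtdt n y, map_zero, add_zero]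
      exact LinearMap.mem_range_self _ _
    set r := (B (n + 1)).restrict hmap with hr_def
    have hrinj : Function.Injective r := by
      intro z₁ z₂ h
      have := congrArg Subtype.val h
      simp only [hr_def, LinearMap.restrict_coe_apply] at this
      exact Subtype.ext (Binj (n + 1) this)
    have hrsurj := LinearMap.injective_iff_surjective.mp hrinj
    obtain ⟨⟨w, hw⟩, hrw⟩ := hrsurj ⟨v, hv⟩
    have hBw : B (n + 1) w = v := by
      have := congrArg Subtype.val hrw
      simpa [hr_def, LinearMap.restrict_coe_apply] using this
    obtain ⟨z, rfl⟩ := hw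
    refine ⟨dt (n + 1) z, ?_⟩
    rw [← hBw, hBapp, hdtdt n z, map_zero, add_zero]
  have surpsi' : ∀ k : ℤ, ∀ v ∈ LinearMap.range (dt k), ∃ y : Cx k, dt k (d k y) = v := by
    intro k
    have h := surpsi (k - 1)
    rw [show k - 1 + 1 = k from by ring] at h
    exact h
  -- φ is bijective
  have phi_bij : ∀ n : ℤ, Function.Bijective ((d n).restrict
      (p := LinearMap.range (dt n)) (q := LinearMap.range (d n))
      (fun x _ => LinearMap.mem_range_self (d n) x)) := by
    intro n
    set φ := (d n).restrict
      (p := LinearMap.range (dt n)) (q := LinearMap.range (d n))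
      (fun x _ => LinearMap.mem_range_self (d n) x) with hφ_def
    have hsurj : Function.Surjective φ := by
      rintro ⟨v, hv⟩
      obtain ⟨y, hy⟩ := surjphi n v hv
      refine ⟨⟨dt n y, LinearMap.mem_range_self _ _⟩, Subtype.ext ?_⟩
      simpa [hφ_def, LinearMap.restrict_coe_apply] using hy
    set ψ := (dt n).restrict
      (p := LinearMap.range (d n)) (q := LinearMap.range (dt n))
      (fun x _ => LinearMap.mem_range_self (dt n) x) with hψ_def
    have hψinj : Function.Injective ψ := by
      rw [injective_iff_map_eq_zero]
      rintro ⟨x, hx⟩ hz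
      have h0 : dt n x = 0 := by
        have := congrArg Subtype.val hz
        simpa [hψ_def, LinearMap.restrict_coe_apply] using this
      exact Subtype.ext (injpsi n x hx h0)
    have h1 : Module.finrank ℂ ↥(LinearMap.range (d n)) ≤
        Module.finrank ℂ ↥(LinearMap.range (dt n)) :=
      LinearMap.finrank_le_finrank_of_injective hψinj
    have hψsurj : Function.Surjective ψ := by
      rintro ⟨v, hv⟩
      obtain ⟨y, hy⟩ := surpsi' n v hv
      refine ⟨⟨d n y, LinearMap.mem_range_self _ _⟩, Subtype.ext ?_⟩
      simpa [hψ_def, LinearMap.restrict_coe_apply] using hy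
    have h2 : Module.finrank ℂ ↥(LinearMap.range (dt n)) =
        Module.finrank ℂ ↥(LinearMap.range (d n)) := by
      refine le_antisymm ?_ h1
      have hrtop : LinearMap.range ψ = ⊤ := LinearMap.range_eq_top.mpr hψsurj
      have h3 := LinearMap.finrank_range_le ψ
      rwa [hrtop, finrank_top] at h3
    exact ⟨(LinearMap.injective_iff_surjective_of_finrank_eq_finrank h2).mpr hsurj, hsurj⟩
  have injphi : ∀ n (x : Cx n), x ∈ LinearMap.range (dt n) → d n x = 0 → x = 0 := by
    intro n x hx h0
    have := (phi_bij n).1 (a₁ := ⟨x, hx⟩) (a₂ := 0) (by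
      apply Subtype.ext
      simpa [LinearMap.restrict_coe_apply] using h0)
    simpa using congrArg Subtype.val this
  -- nonvanishing of a
  have a_ne : ∀ n : ℤ, a n ≠ 0 := by
    intro n
    have hinj : Function.Injective (((dt n).comp (d n)).restrict
        (p := LinearMap.range (dt n)) (q := LinearMap.range (dt n))
        (fun x _ => LinearMap.mem_range_self (dt n) (d n x))) := by
      rw [injective_iff_map_eq_zero]
      rintro ⟨x, hx⟩ hz
      have h0 : dt n (d n x) = 0 := by
        have := congrArg Subtype.val hz
        simpa [LinearMap.restrict_coe_apply] using this
      have hd0 : d n x = 0 := injpsi n (d n x) (LinearMap.mem_range_self _ _) h0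
      exact Subtype.ext (injphi n x hx hd0)
    have hbij : Function.Bijective (((dt n).comp (d n)).restrict
        (p := LinearMap.range (dt n)) (q := LinearMap.range (dt n))
        (fun x _ => LinearMap.mem_range_self (dt n) (d n x))) :=
      ⟨hinj, LinearMap.injective_iff_surjective.mp hinj⟩
    have hu := LinearEquiv.isUnit_det' (LinearEquiv.ofBijective _ hbij)
    exact hu.ne_zero
  -- the key determinant identity at level n+1
  have detB1 : ∀ n : ℤ, LinearMap.det (B (n + 1)) = a (n + 1) * a n := by
    intro n
    have hp : ∀ x ∈ LinearMap.range (dt (n + 1)),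
        B (n + 1) x ∈ LinearMap.range (dt (n + 1)) := by
      rintro x ⟨y, rfl⟩
      rw [hBapp, hdtdt n y, map_zero, add_zero]
      exact LinearMap.mem_range_self _ _
    have hq : ∀ x ∈ LinearMap.range (d n), B (n + 1) x ∈ LinearMap.range (d n) := by
      rintro x ⟨y, rfl⟩
      rw [hBapp, hdd' n y, map_zero, zero_add]
      exact LinearMap.mem_range_self _ _
    have hcompl : IsCompl (LinearMap.range (dt (n + 1))) (LinearMap.range (d n)) := by
      constructor
      · rw [disjoint_iff, Submodule.eq_bot_iff]
        rintro x ⟨hxP, hxQ⟩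
        obtain ⟨z, hz⟩ := hxP
        obtain ⟨y, rfl⟩ := hxQ
        apply Binj (n + 1)
        rw [map_zero, hBapp, hdd' n y, map_zero, zero_add, ← hz, hdtdt n z, map_zero]
      · rw [codisjoint_iff, eq_top_iff]
        rintro z -
        obtain ⟨w, rfl⟩ := Bsurj (n + 1) z
        rw [hBapp]
        exact Submodule.add_mem_sup (LinearMap.mem_range_self _ _)
          (LinearMap.mem_range_self _ _)
    have hdet := aux_det_isCompl hcompl (B (n + 1)) hp hq
    have hpeq : (B (n + 1)).restrict hp = ((dt (n + 1)).comp (d (n + 1))).restrict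
        (p := LinearMap.range (dt (n + 1))) (q := LinearMap.range (dt (n + 1)))
        (fun x _ => LinearMap.mem_range_self (dt (n + 1)) (d (n + 1) x)) := by
      apply LinearMap.ext
      rintro ⟨x, hx⟩
      apply Subtype.ext
      simp only [LinearMap.restrict_coe_apply, LinearMap.comp_apply]
      obtain ⟨y, rfl⟩ := hx
      rw [hBapp, hdtdt n y, map_zero, add_zero]
    have hqmem : ∀ x ∈ LinearMap.range (d n),
        ((d n).comp (dt n)) x ∈ LinearMap.range (d n) :=
      fun x _ => LinearMap.mem_range_self (d n) (dt n x)
    have hqeq : (B (n + 1)).restrict hq = ((d n).comp (dt n)).restrict hqmem := by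
      apply LinearMap.ext
      rintro ⟨x, hx⟩
      apply Subtype.ext
      simp only [LinearMap.restrict_coe_apply, LinearMap.comp_apply]
      obtain ⟨y, rfl⟩ := hx
      rw [hBapp, hdd' n y, map_zero, zero_add]
    -- conjugation: det of the q-part equals a n
    set φe := LinearEquiv.ofBijective _ (phi_bij n) with hφe_def
    have hconj : ((d n).comp (dt n)).restrict hqmem =
        (φe : ↥(LinearMap.range (dt n)) →ₗ[ℂ] ↥(LinearMap.range (d n))) ∘ₗ
          (((dt n).comp (d n)).restrict
            (p := LinearMap.range (dt n)) (q := LinearMap.range (dt n))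
            (fun x _ => LinearMap.mem_range_self (dt n) (d n x))) ∘ₗ
          (φe.symm : ↥(LinearMap.range (d n)) →ₗ[ℂ] ↥(LinearMap.range (dt n))) := by
      have h1 : ∀ z : ↥(LinearMap.range (dt n)),
          ((d n).comp (dt n)).restrict hqmem (φe z) =
            φe ((((dt n).comp (d n)).restrict
              (p := LinearMap.range (dt n)) (q := LinearMap.range (dt n))
              (fun x _ => LinearMap.mem_range_self (dt n) (d n x))) z) := by
        rintro ⟨x, hx⟩
        apply Subtype.ext
        simp [hφe_def, LinearEquiv.ofBijective_apply, LinearMap.restrict_coe_apply]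
      refine LinearMap.ext fun z => ?_
      have h2 := h1 (φe.symm z)
      rw [φe.apply_symm_apply] at h2
      simpa using h2
    rw [hdet, hpeq, hqeq, hconj, LinearMap.det_conj]
  -- shifted version
  have hdetB : ∀ n : ℤ, LinearMap.det (B n) = a n * a (n - 1) := by
    intro n
    have h := detB1 (n - 1)
    rw [show n - 1 + 1 = n from by ring] at h
    exact h
  -- triviality on subsingleton degrees
  have a_triv : ∀ n : ℤ, Subsingleton (Cx n) → a n = 1 := by
    intro n hn
    haveI := hn
    haveI : Subsingleton ↥(LinearMap.range (dt n)) :=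
      ⟨fun x y => Subtype.ext (Subsingleton.elim _ _)⟩
    simp only [ha_def]
    rw [show (((dt n).comp (d n)).restrict
        (p := LinearMap.range (dt n)) (q := LinearMap.range (dt n))
        (fun x _ => LinearMap.mem_range_self (dt n) (d n x))) = LinearMap.id from
      LinearMap.ext fun x => Subsingleton.elim _ _, LinearMap.det_id]
  have B_triv : ∀ n : ℤ, Subsingleton (Cx n) → LinearMap.det (B n) = 1 := by
    intro n hn
    haveI := hn
    rw [show B n = LinearMap.id from LinearMap.ext fun x => Subsingleton.elim _ _,
      LinearMap.det_id]
  -- bound on support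
  obtain ⟨N, hN⟩ : ∃ N : ℕ, ∀ n : ℤ, (n < -(N : ℤ) ∨ (N : ℤ) < n) → Subsingleton (Cx n) := by
    refine ⟨hfin.toFinset.sup fun n => n.natAbs, ?_⟩
    intro n hn
    by_contra hns
    have hmem : n ∈ hfin.toFinset := hfin.mem_toFinset.mpr hns
    have h2 : n.natAbs ≤ hfin.toFinset.sup fun n => n.natAbs :=
      Finset.le_sup (f := fun n : ℤ => n.natAbs) hmem
    omega
  have a1 : ∀ n : ℤ, (n < -(N : ℤ) ∨ (N : ℤ) < n) → a n = 1 := fun n h => a_triv n (hN n h)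
  have B1 : ∀ n : ℤ, (n < -(N : ℤ) ∨ (N : ℤ) < n) → LinearMap.det (B n) = 1 :=
    fun n h => B_triv n (hN n h)
  set T : Finset ℤ := Finset.Icc (-(N : ℤ) - 1) ((N : ℤ) + 1) with hT_def
  have hsupp1 : Function.mulSupport
      (fun n : ℤ => a n ^ ((((-1 : ℤˣ) ^ n : ℤˣ) : ℤ))) ⊆ (T : Set ℤ) := by
    intro n hn
    rw [Function.mem_mulSupport] at hn
    by_contra hnT
    apply hn
    have hb' : n < -(N : ℤ) ∨ (N : ℤ) < n := by
      simp only [hT_def, Finset.coe_Icc, Set.mem_Icc, not_and_or, not_le] at hnT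
      omega
    rw [a1 n hb', one_zpow]
  have hsupp2 : Function.mulSupport
      (fun n : ℤ => LinearMap.det (B n) ^ (((((-1 : ℤˣ) ^ (n + 1) : ℤˣ) : ℤ)) * n)) ⊆
        (T : Set ℤ) := by
    intro n hn
    rw [Function.mem_mulSupport] at hn
    by_contra hnT
    apply hn
    have hb' : n < -(N : ℤ) ∨ (N : ℤ) < n := by
      simp only [hT_def, Finset.coe_Icc, Set.mem_Icc, not_and_or, not_le] at hnT
      omega
    rw [B1 n hb', one_zpow]
  -- exponent arithmetic
  have hu : ∀ k : ℤ, (((-1 : ℤˣ) ^ (k + 1) : ℤˣ) : ℤ) = -(((-1 : ℤˣ) ^ k : ℤˣ) : ℤ) := by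
    intro k
    rw [zpow_add_one]
    simp
  have hexp : ∀ n : ℤ,
      ((((-1 : ℤˣ) ^ (n + 1) : ℤˣ) : ℤ) * n) + ((((-1 : ℤˣ) ^ (n + 1 + 1) : ℤˣ) : ℤ) * (n + 1))
        = (((-1 : ℤˣ) ^ n : ℤˣ) : ℤ) := by
    intro n
    rw [hu (n + 1), hu n]
    ring
  -- the finite product computation
  have key : (∏ n ∈ T, a n ^ ((((-1 : ℤˣ) ^ n : ℤˣ) : ℤ))) =
      ∏ n ∈ T, LinearMap.det (B n) ^ (((((-1 : ℤˣ) ^ (n + 1) : ℤˣ) : ℤ)) * n) := by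
    have step1 : (∏ n ∈ T, LinearMap.det (B n) ^ (((((-1 : ℤˣ) ^ (n + 1) : ℤˣ) : ℤ)) * n)) =
        (∏ n ∈ T, a n ^ (((((-1 : ℤˣ) ^ (n + 1) : ℤˣ) : ℤ)) * n)) *
          ∏ n ∈ T, a (n - 1) ^ (((((-1 : ℤˣ) ^ (n + 1) : ℤˣ) : ℤ)) * n) := by
      rw [← Finset.prod_mul_distrib]
      refine Finset.prod_congr rfl fun n _ => ?_
      rw [hdetB n, mul_zpow]
    have hmap : (Finset.Icc (-(N : ℤ) - 2) (N : ℤ)).map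
        (addRightEmbedding (1 : ℤ)) = T := by
      rw [Finset.map_add_right_Icc, hT_def]
      congr 1 <;> ring
    have step2 : (∏ n ∈ T, a (n - 1) ^ (((((-1 : ℤˣ) ^ (n + 1) : ℤˣ) : ℤ)) * n)) =
        ∏ m ∈ Finset.Icc (-(N : ℤ) - 2) (N : ℤ),
          a m ^ (((((-1 : ℤˣ) ^ (m + 1 + 1) : ℤˣ) : ℤ)) * (m + 1)) := by
      rw [← hmap, Finset.prod_map]
      refine Finset.prod_congr rfl fun m _ => ?_
      simp [addRightEmbedding_apply]
    have step3 : (∏ m ∈ Finset.Icc (-(N : ℤ) - 2) (N : ℤ),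
          a m ^ (((((-1 : ℤˣ) ^ (m + 1 + 1) : ℤˣ) : ℤ)) * (m + 1))) =
        ∏ m ∈ T, a m ^ (((((-1 : ℤˣ) ^ (m + 1 + 1) : ℤˣ) : ℤ)) * (m + 1)) := by
      have hU1 : Finset.Icc (-(N : ℤ) - 2) (N : ℤ) ⊆
          Finset.Icc (-(N : ℤ) - 2) ((N : ℤ) + 1) :=
        Finset.Icc_subset_Icc le_rfl (by omega)
      have hU2 : T ⊆ Finset.Icc (-(N : ℤ) - 2) ((N : ℤ) + 1) := by
        rw [hT_def]
        exact Finset.Icc_subset_Icc (by omega) le_rfl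
      rw [Finset.prod_subset hU1 ?h1, Finset.prod_subset hU2 ?h2]
      case h1 =>
        intro x hx hxs
        have hb' : x < -(N : ℤ) ∨ (N : ℤ) < x := by
          simp only [Finset.mem_Icc] at hx hxs
          omega
        rw [a1 x hb', one_zpow]
      case h2 =>
        intro x hx hxs
        have hb' : x < -(N : ℤ) ∨ (N : ℤ) < x := by
          simp only [hT_def, Finset.mem_Icc] at hx hxs
          omega
        rw [a1 x hb', one_zpow]
    rw [step1, step2, step3, ← Finset.prod_mul_distrib]
    refine (Finset.prod_congr rfl fun n _ => ?_).symm
    rw [← zpow_add₀ (a_ne n), hexp n]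
  have main : (∏ᶠ n : ℤ, a n ^ ((((-1 : ℤˣ) ^ n : ℤˣ) : ℤ))) =
      ∏ᶠ n : ℤ, LinearMap.det (B n) ^ (((((-1 : ℤˣ) ^ (n + 1) : ℤˣ) : ℤ)) * n) := by
    rw [finprod_eq_prod_of_mulSupport_subset _ hsupp1,
      finprod_eq_prod_of_mulSupport_subset _ hsupp2]
    exact key
  simpa only [ha_def] using main
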